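/- Let P, N, K be positive integers with P dividing N-1, P dividing K-1, and K < N. Let S_{P,N,K} be the numerical semigroup generated by {KN + aN - j : 0 ≤ j ≤ a ≤ P}. Then the Frobenius number (largest gap) of S_{P,N,K} is ((K+N-2)/P)·K·N + N² - 3N + 1, equivalently the conductor of S_{P,N,K} equals (N²K + NK² + N²P - 2NK - 3NP + 2P)/P. -/

import Mathlib

lemma mem_char (P N K : ℕ) (hN : 0 < N) (n : ℕ) :
    n ∈ AddSubmonoid.closure {x : ℕ | ∃ a j : ℕ, j ≤ a ∧ a ≤ P ∧ x = K * N + a * N - j} ↔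
    ∃ m A J : ℕ, J ≤ A ∧ A ≤ m * P ∧ n + J = (m * K + A) * N := by
  constructor
  · intro h
    induction h using AddSubmonoid.closure_induction with
    | mem x hx =>
      obtain ⟨a, j, hja, haP, hx⟩ := hx
      refine ⟨1, a, j, hja, by simpa using haP, ?_⟩
      have h1 : j ≤ K * N + a * N := by
        have : a ≤ a * N := Nat.le_mul_of_pos_right a hN
        omega
      subst hx
      have : K * N + a * N - j + j = K * N + a * N := by omega
      rw [this]; ring
    | zero => exact ⟨0, 0, 0, le_rfl, by simp, by simp⟩
    | add x y hx hy ihx ihy =>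
      obtain ⟨m1, A1, J1, h1, h2, h3⟩ := ihx
      obtain ⟨m2, A2, J2, h4, h5, h6⟩ := ihy
      refine ⟨m1 + m2, A1 + A2, J1 + J2, by omega, by nlinarith, ?_⟩
      have : ((m1 + m2) * K + (A1 + A2)) * N = (m1 * K + A1) * N + (m2 * K + A2) * N := by ring
      omega
  · rintro ⟨m, A, J, hJA, hAm, hn⟩
    induction m generalizing n A J with
    | zero =>
      have hA : A = 0 := by omega
      have hJ : J = 0 := by omega
      have hn0 : n = 0 := by simp [hA, hJ] at hn; omega
      rw [hn0]; exact zero_mem _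
    | succ m ih =>
      set a := min A P with ha
      set j := min J a with hj
      have haA : a ≤ A := min_le_left _ _
      have haP : a ≤ P := min_le_right _ _
      have hja : j ≤ a := min_le_right _ _
      have hjJ : j ≤ J := min_le_left _ _
      have hJjAa : J - j ≤ A - a := by omega
      have hAam : A - a ≤ m * P := by
        rcases le_total A P with h | h
        · have : a = A := by omega
          omega
        · have : a = P := by omega
          have : (m + 1) * P = m * P + P := by ring
          omega
      set c1 := (m * K + (A - a)) * N with hc1
      set c2 := (K + a) * N with hc2
      have hsum : c1 + c2 = ((m + 1) * K + A) * N := by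
        rw [hc1, hc2, ← add_mul]
        congr 1
        have : (m + 1) * K = m * K + K := by ring
        omega
      have hje : J - j ≤ c1 := by
        have h1 : A - a ≤ (A - a) * N := Nat.le_mul_of_pos_right _ hN
        have h2 : (A - a) * N ≤ c1 := by rw [hc1]; exact Nat.mul_le_mul_right _ (by omega)
        omega
      have hjc2 : j ≤ c2 := by
        have : a ≤ a * N := Nat.le_mul_of_pos_right _ hN
        have : a * N ≤ c2 := by rw [hc2]; exact Nat.mul_le_mul_right _ (by omega)
        have hK : 0 ≤ K * N := Nat.zero_le _
        have : c2 = K * N + a * N := by rw [hc2]; ring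
        omega
      have hg : K * N + a * N - j ∈ {x : ℕ | ∃ a j : ℕ, j ≤ a ∧ a ≤ P ∧ x = K * N + a * N - j} :=
        ⟨a, j, hja, haP, rfl⟩
      have key : n = (K * N + a * N - j) + (c1 - (J - j)) := by
        have hc2' : c2 = K * N + a * N := by rw [hc2]; ring
        omega
      rw [key]
      exact add_mem (AddSubmonoid.subset_closure hg)
        (ih _ _ _ hJjAa hAam (by omega))

theorem stmt_0 (P N K : ℕ) (hP : 0 < P) (hN : 0 < N) (hK : 0 < K)
    (hPN : P ∣ N - 1) (hPK : P ∣ K - 1) (hKN : K < N)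
    (S : AddSubmonoid ℕ)
    (hS : S = AddSubmonoid.closure
      {x : ℕ | ∃ a j : ℕ, j ≤ a ∧ a ≤ P ∧ x = K * N + a * N - j}) :
    ∃ F : ℕ, IsGreatest {n : ℕ | n ∉ S} F ∧
      (F : ℚ) = ((K : ℚ) + N - 2) / P * K * N + (N : ℚ) ^ 2 - 3 * N + 1 ∧
      (F : ℚ) + 1 = ((N : ℚ) ^ 2 * K + N * K ^ 2 + N ^ 2 * P - 2 * N * K
        - 3 * N * P + 2 * P) / P := by
  have hN2 : 2 ≤ N := by omega
  obtain ⟨u, hu⟩ := hPN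
  obtain ⟨v, hv⟩ := hPK
  have hdvd : K + N - 2 = P * (u + v) := by rw [Nat.mul_add]; omega
  set q := u + v with hqdef
  have hq : K + N - 2 = P * q := hdvd
  have hq1 : 1 ≤ q := by
    rcases Nat.eq_zero_or_pos q with h | h
    · rw [h, Nat.mul_zero] at hq; omega
    · exact h
  have hqKN : 1 ≤ q * K * N := Nat.one_le_iff_ne_zero.mpr (by positivity)
  set F := q * K * N + (N - 1) * (N - 2) - 1 with hFdef
  have hF1 : F + 1 = q * K * N + (N - 1) * (N - 2) := by omega
  -- rational/integer versions
  have hqQ : (K : ℚ) + N - 2 = P * q := by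
    have h := congrArg (fun x : ℕ => (x : ℚ)) hq
    push_cast [Nat.cast_sub (show 2 ≤ K + N by omega)] at h
    linarith
  have hFQ : (F : ℚ) + 1 = (q : ℚ) * K * N + ((N : ℚ) - 1) * ((N : ℚ) - 2) := by
    have h := congrArg (fun x : ℕ => (x : ℚ)) hF1
    push_cast [Nat.cast_sub (show 1 ≤ N by omega), Nat.cast_sub (show 2 ≤ N by omega)] at h
    linarith
  have hqZ : (K : ℤ) + N - 2 = P * q := by
    have h := congrArg (fun x : ℕ => (x : ℤ)) hq
    push_cast [Nat.cast_sub (show 2 ≤ K + N by omega)] at h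
    linarith
  have hFZ : (F : ℤ) = (q : ℤ) * K * N + (N : ℤ) * ((N : ℤ) - 3) + 1 := by
    have h := congrArg (fun x : ℕ => (x : ℤ)) hF1
    push_cast [Nat.cast_sub (show 1 ≤ N by omega), Nat.cast_sub (show 2 ≤ N by omega)] at h
    linear_combination h
  have hP0 : (P : ℚ) ≠ 0 := Nat.cast_ne_zero.mpr (by omega)
  refine ⟨F, ⟨?_, ?_⟩, ?_, ?_⟩
  · -- F ∉ S
    show F ∉ S
    intro hmem
    rw [hS, mem_char P N K hN] at hmem
    obtain ⟨m, A, J, hJA, hAm, heq⟩ := hmem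
    have heqZ : (F : ℤ) + J = ((m : ℤ) * K + A) * N := by exact_mod_cast heq
    set t : ℤ := (m : ℤ) * K + A - (q : ℤ) * K - ((N : ℤ) - 3) with ht
    have hJt : (J : ℤ) + 1 = (N : ℤ) * t := by
      rw [ht]; linear_combination heqZ - hFZ
    have hNZ : (2 : ℤ) ≤ N := by exact_mod_cast hN2
    have ht1 : 1 ≤ t := by
      by_contra h
      push_neg at h
      have h0 : t ≤ 0 := by omega
      have : (N : ℤ) * t ≤ 0 := mul_nonpos_of_nonneg_of_nonpos (by positivity) h0
      have : (0 : ℤ) ≤ J := Int.natCast_nonneg J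
      omega
    set s : ℤ := (q : ℤ) - m with hs
    have hA_eq : (A : ℤ) = s * K + ((N : ℤ) - 3) + t := by rw [hs, ht]; ring
    have hJA' : (J : ℤ) ≤ A := by exact_mod_cast hJA
    have hAm' : (A : ℤ) ≤ (m : ℤ) * P := by exact_mod_cast hAm
    have hKZ : (1 : ℤ) ≤ K := by exact_mod_cast hK
    have hPZ : (1 : ℤ) ≤ P := by exact_mod_cast hP
    have hsK : 1 ≤ s * K := by
      have h0 : (0:ℤ) ≤ (t - 1) * ((N:ℤ) - 1) :=
        mul_nonneg (by linarith) (by linarith)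
      have hexp : (t - 1) * ((N:ℤ) - 1) = (N:ℤ) * t - t - N + 1 := by ring
      linarith
    have hs1 : 1 ≤ s := by
      by_contra h
      push_neg at h
      have h0 : s ≤ 0 := by omega
      have : s * K ≤ 0 := mul_nonpos_of_nonpos_of_nonneg h0 (by linarith)
      linarith
    have hmP : (m : ℤ) * P = ((q : ℤ) - s) * P := by rw [hs]; ring
    have e1 : ((q : ℤ) - s) * P = (P : ℤ) * q - s * P := by ring
    have e2 : s * ((K : ℤ) + P) = s * K + s * P := by ring
    have e3 : (K : ℤ) + P ≤ s * ((K : ℤ) + P) := by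
      have := mul_le_mul_of_nonneg_right hs1 (by linarith : (0:ℤ) ≤ (K:ℤ) + P)
      linarith
    linarith
  · -- upper bound
    intro n hn
    simp only [Set.mem_setOf_eq] at hn
    by_contra hcon
    push_neg at hcon
    apply hn
    have hFn : F + 1 ≤ n := hcon
    rw [hS, mem_char P N K hN]
    set J := (N - n % N) % N with hJ
    have hJN : J < N := Nat.mod_lt _ hN
    have hdvdnJ : N ∣ n + J := by
      rcases Nat.eq_zero_or_pos (n % N) with h0 | h0
      · have hJ0 : J = 0 := by rw [hJ, h0, Nat.sub_zero, Nat.mod_self]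
        rw [hJ0, Nat.add_zero]
        exact Nat.dvd_of_mod_eq_zero h0
      · have hmod : n % N < N := Nat.mod_lt _ hN
        have hJ' : J = N - n % N := by rw [hJ]; exact Nat.mod_eq_of_lt (by omega)
        have hdm := Nat.div_add_mod n N
        have : n + J = N * (n / N) + N := by omega
        rw [this]
        exact ⟨n / N + 1, by ring⟩
    have hbound : q * K * N + J * (N - 1) ≤ n := by
      rcases Nat.lt_or_ge J (N - 1) with hc | hc
      · have h1 : J * (N - 1) ≤ (N - 2) * (N - 1) := Nat.mul_le_mul_right _ (by omega)
        have h2 : (N - 1) * (N - 2) = (N - 2) * (N - 1) := Nat.mul_comm _ _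
        omega
      · have hJe : J = N - 1 := by omega
        have h1 : (N : ℤ) ∣ (F : ℤ) - 1 := ⟨(q : ℤ) * K + (N : ℤ) - 3, by linear_combination hFZ⟩
        have h2 : (N : ℤ) ∣ (n : ℤ) + N - 1 := by
          have : (N : ℤ) ∣ ((n + J : ℕ) : ℤ) := Int.natCast_dvd_natCast.mpr hdvdnJ
          have he : ((n + J : ℕ) : ℤ) = (n : ℤ) + N - 1 := by
            push_cast [hJe, Nat.cast_sub (show 1 ≤ N by omega)]
            ring
          rwa [he] at this
        have h3 : (N : ℤ) ∣ (n : ℤ) - F := by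
          have := dvd_sub (dvd_sub h2 h1) (dvd_refl (N : ℤ))
          have he : (n : ℤ) + N - 1 - ((F : ℤ) - 1) - N = (n : ℤ) - F := by ring
          rwa [he] at this
        obtain ⟨d, hd⟩ := h3
        have hNZ : (0 : ℤ) < N := by exact_mod_cast hN
        have hd1 : 1 ≤ d := by
          by_contra h
          push_neg at h
          have hd0 : d ≤ 0 := by omega
          have : (N : ℤ) * d ≤ 0 := mul_nonpos_of_nonneg_of_nonpos (by linarith) hd0
          have hgt : (F : ℤ) + 1 ≤ n := by exact_mod_cast hFn
          omega
        have hFN : F + N ≤ n := by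
          have h5 : (N : ℤ) * 1 ≤ (N : ℤ) * d :=
            mul_le_mul_of_nonneg_left hd1 (by linarith)
          have hgt : (F : ℤ) ≤ n := by
            have : (F : ℤ) + 1 ≤ n := by exact_mod_cast hFn
            linarith
          have : (F : ℤ) + N ≤ n := by linarith
          exact_mod_cast this
        have h4 : (N - 1) * (N - 1) = (N - 1) * (N - 2) + (N - 1) := by
          rw [← Nat.mul_succ]
          congr 1
          omega
        rw [hJe]
        omega
    set c := (n + J) / N with hc
    have hcN : c * N = n + J := Nat.div_mul_cancel hdvdnJ
    have hcge : q * K + J ≤ c := by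
      have hJN1 : J * N = J * (N - 1) + J := by
        conv_lhs => rw [show N = (N - 1) + 1 by omega]
        rw [Nat.mul_succ]
      have h1 : (q * K + J) * N ≤ c * N := by
        rw [hcN, Nat.add_mul]
        omega
      exact Nat.le_of_mul_le_mul_right h1 hN
    rcases le_or_gt c (q * (K + P)) with hcle | hcgt
    · refine ⟨q, c - q * K, J, ?_, ?_, ?_⟩
      · omega
      · have h1 : q * (K + P) = q * K + q * P := Nat.mul_add _ _ _
        omega
      · have h2 : q * K + (c - q * K) = c := by omega
        rw [h2, hcN]
    · set d := c / (K + P) with hd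
      have hKP : 0 < K + P := by omega
      have hd1 : d * (K + P) ≤ c := Nat.div_mul_le_self c (K + P)
      have hd2 : c < (d + 1) * (K + P) := (Nat.div_lt_iff_lt_mul hKP).mp (Nat.lt_succ_self _)
      have hdq : q ≤ d := by
        rw [hd]; exact (Nat.le_div_iff_mul_le hKP).mpr (le_of_lt hcgt)
      have e1 : d * (K + P) = d * K + d * P := Nat.mul_add _ _ _
      have e2 : q * P ≤ d * P := Nat.mul_le_mul_right _ hdq
      have e3 : P * q = q * P := Nat.mul_comm _ _
      have e4 : (d + 1) * K = d * K + K := by ring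
      have e5 : (d + 1) * (K + P) = (d + 1) * K + (d + 1) * P := Nat.mul_add _ _ _
      have e6 : (d + 1) * P = d * P + P := by ring
      have e7 : q * (K + P) = q * K + q * P := Nat.mul_add _ _ _
      have hAJ : J ≤ c - (d + 1) * K := by
        rcases Nat.eq_or_lt_of_le hdq with heq | hlt
        · -- d = q
          rw [← heq] at e1 e2 e4 ⊢
          omega
        · have e8 : (q + 1) * P ≤ d * P := Nat.mul_le_mul_right _ hlt
          have e9 : (q + 1) * P = q * P + P := by ring
          omega
      refine ⟨d + 1, c - (d + 1) * K, J, hAJ, by omega, ?_⟩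
      have hcK : (d + 1) * K ≤ c := by omega
      have h2 : (d + 1) * K + (c - (d + 1) * K) = c := by omega
      rw [h2, hcN]
  · -- first rational identity
    rw [hqQ, mul_div_cancel_left₀ _ hP0]
    linear_combination hFQ
  · -- second rational identity
    rw [eq_div_iff hP0]
    linear_combination (P : ℚ) * hFQ - (N : ℚ) * K * hqQ
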